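/- Let v ∈ ℝ^M be a strictly positive vector such that 𝟙, v, and v⊙v are linearly independent, and let c > 0 and t, u ∈ ℝ with t ≠ u such that u·vᵢ + (1−u) > 0 for all i. Define s ∈ ℝ^M by sᵢ = c·(t·vᵢ + (1−t))/(u·vᵢ + (1−u)). Then 𝟙, s, and s⊙s are linearly independent. -/

import Mathlib

/-- independence of 𝟙, s, s⊙s for a Möbius-type transform s of v. -/
theorem stmt2 {M : ℕ} (v : Fin M → ℝ) (hv : ∀ i, 0 < v i)
    (hli : LinearIndependent ℝ ![fun _ => (1 : ℝ), v, v * v])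
    (c t u : ℝ) (hc : 0 < c) (htu : t ≠ u)
    (hden : ∀ i, 0 < u * v i + (1 - u))
    (s : Fin M → ℝ)
    (hs : ∀ i, s i = c * (t * v i + (1 - t)) / (u * v i + (1 - u))) :
    LinearIndependent ℝ ![fun _ => (1 : ℝ), s, s * s] := by
  have hc0 : c ≠ 0 := ne_of_gt hc
  have htu0 : t - u ≠ 0 := sub_ne_zero.mpr htu
  rw [Fintype.linearIndependent_iff] at hli ⊢
  intro g hg
  -- pointwise equation
  have hpt : ∀ j, g 0 + g 1 * s j + g 2 * (s j * s j) = 0 := by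
    intro j
    have := congrFun hg j
    simpa [Fin.sum_univ_three, Pi.mul_apply, mul_assoc] using this
  -- the clearing-denominators relation
  have hsd : ∀ j, s j * (u * v j + (1 - u)) = c * (t * v j + (1 - t)) := by
    intro j
    rw [hs j]
    exact div_mul_cancel₀ _ (ne_of_gt (hden j))
  set e0 : ℝ := g 0 * (1-u)^2 + g 1 * c * (1-t) * (1-u) + g 2 * c^2 * (1-t)^2 with he0
  set e1 : ℝ := g 0 * (2*u*(1-u)) + g 1 * c * (t*(1-u) + u*(1-t)) + g 2 * c^2 * (2*t*(1-t)) with he1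
  set e2 : ℝ := g 0 * u^2 + g 1 * c * (t*u) + g 2 * c^2 * t^2 with he2
  have key := hli ![e0, e1, e2] (by
    funext j
    have h1 := hpt j
    have h2 := hsd j
    simp only [Fin.sum_univ_three, Matrix.cons_val_zero, Matrix.cons_val_one, Matrix.head_cons, Matrix.cons_val_two, Matrix.tail_cons,
      Pi.add_apply, Pi.smul_apply, Pi.mul_apply, Pi.zero_apply, smul_eq_mul]
    rw [he0, he1, he2]
    linear_combination (u * v j + (1-u))^2 * h1
      - (g 1 * (u * v j + (1-u)) + g 2 * (s j * (u * v j + (1-u)) + c * (t * v j + (1-t)))) * h2)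
  have h0 : e0 = 0 := by simpa using key 0
  have h1 : e1 = 0 := by simpa using key 1
  have h2 : e2 = 0 := by simpa using key 2
  rw [he0] at h0; rw [he1] at h1; rw [he2] at h2
  have hA : g 0 = 0 := by
    have h : g 0 * ((t-u)^2) = 0 := by
      linear_combination t^2 * h0 - t*(1-t)*h1 + (1-t)^2 * h2
    exact (mul_eq_zero.mp h).resolve_right (pow_ne_zero 2 htu0)
  have hC : g 2 = 0 := by
    have h : g 2 * (c^2 * (t-u)^2) = 0 := by
      linear_combination u^2 * h0 - u*(1-u)*h1 + (1-u)^2 * h2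
    exact (mul_eq_zero.mp h).resolve_right
      (mul_ne_zero (pow_ne_zero 2 hc0) (pow_ne_zero 2 htu0))
  have hB : g 1 = 0 := by
    have h : g 1 * c = 0 := by
      linear_combination h0 + h1 + h2 - hA - (c^2) * hC
    exact (mul_eq_zero.mp h).resolve_right hc0
  intro i
  fin_cases i
  · exact hA
  · exact hB
  · exact hC
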